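/- Let M be a matroid with finite ground set E, |E| ≥ 2, which is 2-connected in the sense that for every pair of distinct elements e,f ∈ E there exists a circuit of M containing both e and f. Let d(2) be the number of 2-element circuits of M and d*(2) the number of 2-element circuits of the dual matroid M*. If d(2) + d*(2) ≤ 1, then there exists an element e ∈ E such that both the deletion M∖e and the contraction M/e are 2-connected in the same sense. -/

import Mathlib

open Matroid

/-- A circuit of a matroid: a minimal dependent set, i.e. a dependent set all of whose
proper subsets are independent. -/
def Matroid.IsCircuit' {α : Type*} (M : Matroid α) (C : Set α) : Prop :=
  M.Dep C ∧ ∀ D : Set α, D ⊂ C → M.Indep D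

/-- A matroid (with at least 2 elements) is 2-connected if every pair of distinct
elements of the ground set lies in a common circuit. -/
def Matroid.TwoConn {α : Type*} (M : Matroid α) : Prop :=
  ∀ ⦃e f : α⦄, e ∈ M.E → f ∈ M.E → e ≠ f →
    ∃ C : Set α, M.IsCircuit' C ∧ e ∈ C ∧ f ∈ C

/-- Deletion `M ∖ X`: the restriction of `M` to `M.E \ X`. -/
def Matroid.del {α : Type*} (M : Matroid α) (X : Set α) : Matroid α :=
  M ↾ (M.E \ X)

/-- Contraction `M / X`, defined by duality: `M / X = (M✶ ∖ X)✶`. -/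
def Matroid.con {α : Type*} (M : Matroid α) (X : Set α) : Matroid α :=
  ((M✶).del X)✶

namespace Matroid

variable {α : Type*} {M N : Matroid α} {C C₁ C₂ D S A B I X : Set α} {e f x y z a b g p : α}

/-! ### Basic circuit facts -/

lemma IsCircuit'.dep (hC : M.IsCircuit' C) : M.Dep C := hC.1

lemma IsCircuit'.subset_ground (hC : M.IsCircuit' C) : C ⊆ M.E := hC.1.subset_ground

lemma IsCircuit'.nonempty (hC : M.IsCircuit' C) : C.Nonempty := by
  rcases C.eq_empty_or_nonempty with h | h
  · exact absurd (h ▸ M.empty_indep) hC.1.not_indep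
  · exact h

lemma IsCircuit'.finite [M.Finite] (hC : M.IsCircuit' C) : C.Finite :=
  M.set_finite C hC.subset_ground

lemma IsCircuit'.diff_singleton_indep (hC : M.IsCircuit' C) (hx : x ∈ C) :
    M.Indep (C \ {x}) :=
  hC.2 _ (Set.sdiff_singleton_ssubset.2 hx)

/-- A dependent subset of a circuit is the whole circuit; in particular no circuit is
a proper subset of another. -/
lemma IsCircuit'.not_dep_ssubset (hC : M.IsCircuit' C) (hD : D ⊂ C) : ¬ M.Dep D :=
  (hC.2 D hD).not_dep

lemma exists_circuit_subset_aux [M.Finite] :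
    ∀ n : ℕ, ∀ D : Set α, D.ncard ≤ n → M.Dep D → ∃ C, M.IsCircuit' C ∧ C ⊆ D := by
  intro n
  induction n with
  | zero =>
    intro D hle hD
    have hfin : D.Finite := M.set_finite D hD.subset_ground
    have : D = ∅ := by
      rw [← Set.ncard_eq_zero hfin]; omega
    exact absurd (this ▸ M.empty_indep) hD.not_indep
  | succ n ih =>
    intro D hle hD
    by_cases h : ∀ D' : Set α, D' ⊂ D → M.Indep D'
    · exact ⟨D, ⟨hD, h⟩, subset_rfl⟩
    · push_neg at h
      obtain ⟨D', hss, hdep⟩ := h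
      have hD' : M.Dep D' := ⟨hdep, hss.subset.trans hD.subset_ground⟩
      have hfin : D.Finite := M.set_finite D hD.subset_ground
      have hlt : D'.ncard < D.ncard := Set.ncard_lt_ncard hss hfin
      obtain ⟨C, hC, hCD⟩ := ih D' (by omega) hD'
      exact ⟨C, hC, hCD.trans hss.subset⟩

lemma Dep.exists_circuit_subset [M.Finite] (hD : M.Dep D) : ∃ C, M.IsCircuit' C ∧ C ⊆ D :=
  exists_circuit_subset_aux D.ncard D le_rfl hD

lemma IsCircuit'.mem_closure_diff_singleton (hC : M.IsCircuit' C) (hx : x ∈ C) :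
    x ∈ M.closure (C \ {x}) := by
  have hI : M.Indep (C \ {x}) := hC.diff_singleton_indep hx
  by_contra h
  have hins : M.Indep (insert x (C \ {x})) :=
    (hI.insert_indep_iff_of_notMem (by simp)).2 ⟨hC.subset_ground hx, h⟩
  rw [Set.insert_diff_singleton, Set.insert_eq_of_mem hx] at hins
  exact hC.1.not_indep hins

/-- Weak circuit elimination. -/
lemma circuit_elim_weak (hC₁ : M.IsCircuit' C₁) (hC₂ : M.IsCircuit' C₂) (hne : C₁ ≠ C₂)
    (he₁ : e ∈ C₁) (he₂ : e ∈ C₂) : M.Dep ((C₁ ∪ C₂) \ {e}) := by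
  -- find f ∈ C₂ \ C₁
  have hf : ∃ f, f ∈ C₂ ∧ f ∉ C₁ := by
    by_contra h
    push_neg at h
    have hss : C₂ ⊂ C₁ := ⟨h, fun h' => hne (subset_antisymm h' h)⟩
    exact (hC₁.2 C₂ hss).not_dep hC₂.1
  obtain ⟨f, hfC₂, hfC₁⟩ := hf
  have hef : e ≠ f := fun h => hfC₁ (h ▸ he₁)
  set Y : Set α := (C₁ ∪ C₂) \ {e} with hY
  set X : Set α := (C₁ ∪ C₂) \ {e, f} with hX
  have hYE : Y ⊆ M.E :=
    Set.diff_subset.trans (Set.union_subset hC₁.subset_ground hC₂.subset_ground)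
  have heX : e ∈ M.closure X := by
    refine M.closure_subset_closure ?_ (hC₁.mem_closure_diff_singleton he₁)
    intro z hz
    exact ⟨Or.inl hz.1, by rintro (rfl | rfl); exact hz.2 rfl; exact hfC₁ hz.1⟩
  have hfX : f ∈ M.closure X := by
    have h1 : f ∈ M.closure (insert e X) := by
      refine M.closure_subset_closure ?_ (hC₂.mem_closure_diff_singleton hfC₂)
      intro z hz
      by_cases hze : z = e
      · exact hze ▸ Set.mem_insert e X
      · exact Set.mem_insert_of_mem _ ⟨Or.inr hz.1, by rintro (rfl | rfl); exact hze rfl; exact hz.2 rfl⟩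
    rwa [closure_insert_eq_of_mem_closure heX] at h1
  by_contra hdep
  have hYI : M.Indep Y := ((M.not_dep_iff hYE).1 hdep)
  have hXY : X ⊆ Y := by
    intro z hz
    refine ⟨hz.1, fun h => hz.2 ?_⟩
    rw [Set.mem_singleton_iff] at h
    exact h ▸ Set.mem_insert e {f}
  have hfnX : f ∉ X := fun h => h.2 (Or.inr rfl)
  have hins : insert f X = Y := by
    ext z
    constructor
    · rintro (rfl | hz)
      · exact ⟨Or.inr hfC₂, fun h => hef (Set.mem_singleton_iff.1 h).symm⟩
      · exact hXY hz
    · rintro ⟨hz1, hz2⟩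
      by_cases hzf : z = f
      · exact Or.inl hzf
      · exact Or.inr ⟨hz1, by rintro (rfl | rfl); exact hz2 rfl; exact hzf rfl⟩
  have hXI : M.Indep X := hYI.subset hXY
  have := (hXI.insert_indep_iff_of_notMem hfnX).1 (hins ▸ hYI)
  exact this.2 hfX


/-- Strong circuit elimination, with fuel. -/
lemma circuit_elim_strong_aux [M.Finite] :
    ∀ n : ℕ, ∀ C₁ C₂ : Set α, ∀ e f : α, (C₁ ∪ C₂).ncard ≤ n →
    M.IsCircuit' C₁ → M.IsCircuit' C₂ → e ∈ C₁ → e ∈ C₂ → f ∈ C₁ → f ∉ C₂ →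
    ∃ C₃, M.IsCircuit' C₃ ∧ C₃ ⊆ (C₁ ∪ C₂) \ {e} ∧ f ∈ C₃ := by
  intro n
  induction n with
  | zero =>
    intro C₁ C₂ e f hle hC₁ hC₂ he₁ he₂ hf₁ hf₂
    exfalso
    have hfin : (C₁ ∪ C₂).Finite :=
      M.set_finite _ (Set.union_subset hC₁.subset_ground hC₂.subset_ground)
    have : (C₁ ∪ C₂).Nonempty := ⟨e, Or.inl he₁⟩
    have := Set.ncard_pos hfin |>.2 this
    omega
  | succ n ih =>
    intro C₁ C₂ e f hle hC₁ hC₂ he₁ he₂ hf₁ hf₂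
    have hne : C₁ ≠ C₂ := fun h => hf₂ (h ▸ hf₁)
    have hufin : (C₁ ∪ C₂).Finite :=
      M.set_finite _ (Set.union_subset hC₁.subset_ground hC₂.subset_ground)
    have hdep := circuit_elim_weak hC₁ hC₂ hne he₁ he₂
    obtain ⟨C₃, hC₃, hC₃sub⟩ := hdep.exists_circuit_subset
    by_cases hfC₃ : f ∈ C₃
    · exact ⟨C₃, hC₃, hC₃sub, hfC₃⟩
    -- pick g ∈ C₃ \ C₁ (so g ∈ C₂ \ C₁)
    have hg : ∃ g, g ∈ C₃ ∧ g ∉ C₁ := by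
      by_contra h
      push_neg at h
      have heC₃ : e ∉ C₃ := fun hh => (hC₃sub hh).2 rfl
      have hss : C₃ ⊂ C₁ := ⟨h, fun h' => heC₃ (h' he₁)⟩
      exact (hC₁.not_dep_ssubset hss) hC₃.1
    obtain ⟨g, hgC₃, hgC₁⟩ := hg
    have hgC₂ : g ∈ C₂ := ((hC₃sub hgC₃).1).resolve_left hgC₁
    have heC₃ : e ∉ C₃ := fun hh => (hC₃sub hh).2 rfl
    -- first recursive call : circuits C₂, C₃, common g, retain e
    have hm₁ : (C₂ ∪ C₃).ncard ≤ n := by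
      have hsub : C₂ ∪ C₃ ⊆ C₁ ∪ C₂ := by
        refine Set.union_subset (fun z hz => Or.inr hz) (fun z hz => (hC₃sub hz).1)
      have hss : C₂ ∪ C₃ ⊂ C₁ ∪ C₂ :=
        ⟨hsub, fun h' => (by rcases h' (Or.inl hf₁) with h | h; exact hf₂ h; exact hfC₃ h)⟩
      have := Set.ncard_lt_ncard hss hufin
      omega
    obtain ⟨C₄, hC₄, hC₄sub, heC₄⟩ := ih C₂ C₃ g e hm₁ hC₂ hC₃ hgC₂ hgC₃ he₂ heC₃
    -- second recursive call : circuits C₁, C₄, common e, retain f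
    have hfC₄ : f ∉ C₄ := by
      intro h
      rcases (hC₄sub h).1 with h' | h'
      · exact hf₂ h'
      · exact hfC₃ h'
    have hgC₄ : g ∉ C₄ := fun h => (hC₄sub h).2 rfl
    have hC₄u : C₄ ⊆ C₁ ∪ C₂ := by
      intro z hz
      rcases (hC₄sub hz).1 with h' | h'
      · exact Or.inr h'
      · exact (hC₃sub h').1
    have hm₂ : (C₁ ∪ C₄).ncard ≤ n := by
      have hsub : C₁ ∪ C₄ ⊆ C₁ ∪ C₂ := Set.union_subset (fun z hz => Or.inl hz) hC₄u
      have hss : C₁ ∪ C₄ ⊂ C₁ ∪ C₂ := by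
        refine ⟨hsub, fun h' => ?_⟩
        rcases h' (Or.inr hgC₂) with h | h
        · exact hgC₁ h
        · exact hgC₄ h
      have := Set.ncard_lt_ncard hss hufin
      omega
    obtain ⟨C₅, hC₅, hC₅sub, hfC₅⟩ := ih C₁ C₄ e f hm₂ hC₁ hC₄ he₁ heC₄ hf₁ hfC₄
    refine ⟨C₅, hC₅, ?_, hfC₅⟩
    intro z hz
    obtain ⟨hz1, hz2⟩ := hC₅sub hz
    rcases hz1 with h' | h'
    · exact ⟨Or.inl h', hz2⟩
    · exact ⟨hC₄u h', hz2⟩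

/-- Strong circuit elimination. -/
lemma circuit_elim_strong [M.Finite] (hC₁ : M.IsCircuit' C₁) (hC₂ : M.IsCircuit' C₂)
    (he₁ : e ∈ C₁) (he₂ : e ∈ C₂) (hf₁ : f ∈ C₁) (hf₂ : f ∉ C₂) :
    ∃ C₃, M.IsCircuit' C₃ ∧ C₃ ⊆ (C₁ ∪ C₂) \ {e} ∧ f ∈ C₃ :=
  circuit_elim_strong_aux (C₁ ∪ C₂).ncard C₁ C₂ e f le_rfl hC₁ hC₂ he₁ he₂ hf₁ hf₂

/-- Transitivity of the "common circuit" relation, with fuel. -/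
lemma circuit_trans_aux [M.Finite] :
    ∀ n : ℕ, ∀ C₁ C₂ : Set α, ∀ x z : α, (C₁ ∪ C₂).ncard ≤ n →
    M.IsCircuit' C₁ → M.IsCircuit' C₂ → x ∈ C₁ → z ∈ C₂ → (C₁ ∩ C₂).Nonempty →
    ∃ C, M.IsCircuit' C ∧ x ∈ C ∧ z ∈ C := by
  intro n
  induction n with
  | zero =>
    intro C₁ C₂ x z hle hC₁ hC₂ hx hz hint
    exfalso
    have hfin : (C₁ ∪ C₂).Finite :=
      M.set_finite _ (Set.union_subset hC₁.subset_ground hC₂.subset_ground)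
    have : (C₁ ∪ C₂).Nonempty := ⟨x, Or.inl hx⟩
    have := Set.ncard_pos hfin |>.2 this
    omega
  | succ n ih =>
    intro C₁ C₂ x z hle hC₁ hC₂ hx hz hint
    by_cases hzC₁ : z ∈ C₁
    · exact ⟨C₁, hC₁, hx, hzC₁⟩
    by_cases hxC₂ : x ∈ C₂
    · exact ⟨C₂, hC₂, hxC₂, hz⟩
    obtain ⟨h, hh₁, hh₂⟩ := hint
    have hufin : (C₁ ∪ C₂).Finite :=
      M.set_finite _ (Set.union_subset hC₁.subset_ground hC₂.subset_ground)
    -- eliminate h from C₁,C₂ retaining x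
    obtain ⟨C₃, hC₃, hC₃sub, hxC₃⟩ := circuit_elim_strong hC₁ hC₂ hh₁ hh₂ hx hxC₂
    by_cases hzC₃ : z ∈ C₃
    · exact ⟨C₃, hC₃, hxC₃, hzC₃⟩
    have hhC₃ : h ∉ C₃ := fun hh => (hC₃sub hh).2 rfl
    -- pick g ∈ C₃ ∩ (C₂ \ C₁)
    have hg : ∃ g, g ∈ C₃ ∧ g ∉ C₁ := by
      by_contra hcon
      push_neg at hcon
      have hss : C₃ ⊂ C₁ := ⟨hcon, fun h' => hhC₃ (h' hh₁)⟩
      exact (hC₁.not_dep_ssubset hss) hC₃.1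
    obtain ⟨g, hgC₃, hgC₁⟩ := hg
    have hgC₂ : g ∈ C₂ := ((hC₃sub hgC₃).1).resolve_left hgC₁
    -- eliminate g from C₂,C₃ retaining z
    obtain ⟨C₄, hC₄, hC₄sub, hzC₄⟩ := circuit_elim_strong hC₂ hC₃ hgC₂ hgC₃ hz hzC₃
    by_cases hxC₄ : x ∈ C₄
    · exact ⟨C₄, hC₄, hxC₄, hzC₄⟩
    have hgC₄ : g ∉ C₄ := fun hh => (hC₄sub hh).2 rfl
    -- C₄ meets C₁
    have hint' : (C₁ ∩ C₄).Nonempty := by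
      by_contra hcon
      rw [Set.not_nonempty_iff_eq_empty] at hcon
      have hss : C₄ ⊂ C₂ := by
        refine ⟨fun t ht => ?_, fun h' => hgC₄ (h' hgC₂)⟩
        rcases (hC₄sub ht).1 with h' | h'
        · exact h'
        · rcases (hC₃sub h').1 with h'' | h''
          · exact absurd (hcon ▸ (Set.mem_inter h'' ht)) (Set.notMem_empty t)
          · exact h''
      exact (hC₂.not_dep_ssubset hss) hC₄.1
    have hC₄u : C₄ ⊆ C₁ ∪ C₂ := by
      intro t ht
      rcases (hC₄sub ht).1 with h' | h'
      · exact Or.inr h'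
      · exact (hC₃sub h').1
    have hm : (C₁ ∪ C₄).ncard ≤ n := by
      have hsub : C₁ ∪ C₄ ⊆ C₁ ∪ C₂ := Set.union_subset (fun t ht => Or.inl ht) hC₄u
      have hss : C₁ ∪ C₄ ⊂ C₁ ∪ C₂ := by
        refine ⟨hsub, fun h' => ?_⟩
        rcases h' (Or.inr hgC₂) with hcase | hcase
        · exact hgC₁ hcase
        · exact hgC₄ hcase
      have := Set.ncard_lt_ncard hss hufin
      omega
    exact ih C₁ C₄ x z hm hC₁ hC₄ hx hzC₄ hint'

lemma circuit_trans [M.Finite] (hC₁ : M.IsCircuit' C₁) (hC₂ : M.IsCircuit' C₂)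
    (hx : x ∈ C₁) (hz : z ∈ C₂) (hint : (C₁ ∩ C₂).Nonempty) :
    ∃ C, M.IsCircuit' C ∧ x ∈ C ∧ z ∈ C :=
  circuit_trans_aux (C₁ ∪ C₂).ncard C₁ C₂ x z le_rfl hC₁ hC₂ hx hz hint


/-! ### Deletion, contraction, duality -/

lemma del_ground (M : Matroid α) (X : Set α) : (M.del X).E = M.E \ X := by
  simp [Matroid.del]

lemma con_ground (M : Matroid α) (X : Set α) : (M.con X).E = M.E \ X := by
  simp [Matroid.con, Matroid.del]

instance del_finite [M.Finite] {X : Set α} : (M.del X).Finite :=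
  ⟨by rw [del_ground]; exact M.ground_finite.diff⟩

instance con_finite [M.Finite] {X : Set α} : (M.con X).Finite :=
  ⟨by rw [con_ground]; exact M.ground_finite.diff⟩

lemma del_indep_iff {X I : Set α} : (M.del X).Indep I ↔ M.Indep I ∧ I ⊆ M.E \ X :=
  restrict_indep_iff

lemma del_circuit_iff {X : Set α} :
    (M.del X).IsCircuit' C ↔ M.IsCircuit' C ∧ C ⊆ M.E \ X := by
  constructor
  · rintro ⟨hdep, hmin⟩
    have hCsub : C ⊆ M.E \ X := hdep.subset_ground.trans_eq (del_ground M X)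
    refine ⟨⟨⟨fun hI => hdep.not_indep (del_indep_iff.2 ⟨hI, hCsub⟩),
      hCsub.trans Set.diff_subset⟩, fun D hD => (del_indep_iff.1 (hmin D hD)).1⟩, hCsub⟩
  · rintro ⟨⟨hdep, hmin⟩, hCsub⟩
    refine ⟨⟨fun hI => hdep.not_indep (del_indep_iff.1 hI).1, by rwa [del_ground]⟩,
      fun D hD => del_indep_iff.2 ⟨hmin D hD, hD.subset.trans hCsub⟩⟩

lemma dual_dual_circuit_iff : (M✶✶).IsCircuit' C ↔ M.IsCircuit' C := by
  rw [dual_dual]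

/-- Independence in a single-element contraction, for a non-loop element. -/
lemma con_indep_iff (hx : M.Indep {x}) {I : Set α} :
    (M.con {x}).Indep I ↔ x ∉ I ∧ M.Indep (insert x I) := by
  have hxE : x ∈ M.E := hx.subset_ground rfl
  have hNg : (M✶.del {x}).E = M.E \ {x} := by rw [del_ground, dual_ground]
  constructor
  · intro hI
    obtain ⟨hIsub, B, hB, hdisj⟩ := (dual_indep_iff_exists' (M := M✶.del {x})).1 hI
    rw [hNg] at hIsub
    have hxI : x ∉ I := fun h => (hIsub h).2 rfl
    -- B is a base of M✶.del {x}, i.e. a basis of M.E \ {x} in M✶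
    have hBbasis : M✶.IsBasis B (M.E \ {x}) := by
      have := (isBase_restrict_iff (M := M✶) (X := M✶.E \ {x}) Set.diff_subset).1
        (by rw [Matroid.del] at hB; exact hB)
      rwa [dual_ground] at this
    -- a base of M avoiding... exists a base of M✶ inside M.E \ {x}
    obtain ⟨B₀, hB₀, hxB₀⟩ := hx.exists_isBase_superset
    have hB₀x : x ∈ B₀ := hxB₀ rfl
    have hcompl : M✶.IsBase (M.E \ B₀) := hB₀.compl_isBase_dual
    have hcomplsub : M.E \ B₀ ⊆ M.E \ {x} := fun z hz =>
      ⟨hz.1, fun h => hz.2 (h ▸ hB₀x)⟩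
    have hBbase : M✶.IsBase B := hcompl.isBase_of_isBasis_superset hcomplsub hBbasis
    have hMB : M.IsBase (M.E \ B) := hBbase.compl_isBase_of_dual
    refine ⟨hxI, hMB.indep.subset ?_⟩
    intro z hz
    rcases hz with rfl | hz
    · exact ⟨hxE, fun h => (hBbasis.subset h).2 rfl⟩
    · exact ⟨(hIsub hz).1, fun h => hdisj.ne_of_mem hz h rfl⟩
  · rintro ⟨hxI, hins⟩
    obtain ⟨B₀, hB₀, hsub⟩ := hins.exists_isBase_superset
    have hxB₀ : x ∈ B₀ := hsub (Set.mem_insert x I)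
    have hB : M✶.IsBase (M.E \ B₀) := hB₀.compl_isBase_dual
    have hBsub : M.E \ B₀ ⊆ M.E \ {x} := fun z hz => ⟨hz.1, fun h => hz.2 (h ▸ hxB₀)⟩
    have hBasis : M✶.IsBasis (M.E \ B₀) (M.E \ {x}) := by
      have h1 : M✶.IsBasis (M.E \ B₀) M✶.E := hB.isBasis_ground
      exact h1.isBasis_subset hBsub (by rw [dual_ground]; exact Set.diff_subset)
    have hBase : (M✶.del {x}).IsBase (M.E \ B₀) := by
      rw [Matroid.del]
      exact (isBase_restrict_iff (M := M✶) (X := M✶.E \ {x})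
        Set.diff_subset).2 (by rwa [dual_ground])
    refine (dual_indep_iff_exists' (M := M✶.del {x})).2 ⟨?_, M.E \ B₀, hBase, ?_⟩
    · rw [hNg]
      exact fun z hz => ⟨hins.subset_ground (Set.mem_insert_of_mem _ hz),
        fun h => hxI (h ▸ hz)⟩
    · exact Set.disjoint_left.2 fun z hz hz' => hz'.2 (hsub (Set.mem_insert_of_mem _ hz))

lemma con_dep_iff (hx : M.Indep {x}) {C : Set α} :
    (M.con {x}).Dep C ↔ x ∉ C ∧ C ⊆ M.E ∧ M.Dep (insert x C) := by
  have hxE : x ∈ M.E := hx.subset_ground rfl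
  have hg : (M.con {x}).E = M.E \ {x} := con_ground M {x}
  constructor
  · rintro ⟨hni, hsub⟩
    rw [hg] at hsub
    have hxC : x ∉ C := fun h => (hsub h).2 rfl
    refine ⟨hxC, hsub.trans Set.diff_subset, ?_⟩
    refine ⟨fun hI => hni ((con_indep_iff hx).2 ⟨hxC, hI⟩), ?_⟩
    exact Set.insert_subset hxE (hsub.trans Set.diff_subset)
  · rintro ⟨hxC, hCE, hdep⟩
    refine ⟨fun hI => ?_, ?_⟩
    · obtain ⟨-, hI'⟩ := (con_indep_iff hx).1 hI
      exact hdep.not_indep hI'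
    · rw [hg]
      exact fun z hz => ⟨hCE hz, fun h => hxC (h ▸ hz)⟩

/-- If `C` is a circuit containing a non-loop `x`, then `C \ {x}` is a circuit of `M / x`. -/
lemma circuit_con_of_circuit (hx : M.Indep {x}) (hC : M.IsCircuit' C) (hxC : x ∈ C) :
    (M.con {x}).IsCircuit' (C \ {x}) := by
  constructor
  · refine (con_dep_iff hx).2 ⟨by simp, Set.diff_subset.trans hC.subset_ground, ?_⟩
    rw [Set.insert_diff_singleton, Set.insert_eq_of_mem hxC]
    exact hC.1
  · intro D hD
    have hxD : x ∉ D := fun h => (hD.subset h).2 rfl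
    refine (con_indep_iff hx).2 ⟨hxD, hC.2 _ ?_⟩
    obtain ⟨w, hw, hwD⟩ := Set.exists_of_ssubset hD
    refine ⟨Set.insert_subset hxC (hD.subset.trans (Set.diff_subset.trans subset_rfl)), ?_⟩
    intro hsub
    have hwmem : w ∈ insert x D := hsub hw.1
    rcases hwmem with rfl | hwmem
    · exact hw.2 rfl
    · exact hwD hwmem


/-! ### Separators and connected components -/

/-- `S` is a separator: every circuit lies inside `S` or misses `S`. -/
def IsSep (M : Matroid α) (S : Set α) : Prop :=
  S ⊆ M.E ∧ ∀ C, M.IsCircuit' C → C ⊆ S ∨ Disjoint C S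

lemma IsSep.compl (hS : M.IsSep S) : M.IsSep (M.E \ S) := by
  refine ⟨Set.diff_subset, fun C hC => ?_⟩
  rcases hS.2 C hC with h | h
  · exact Or.inr (Set.disjoint_left.2 fun z hz hz' => hz'.2 (h hz))
  · exact Or.inl fun z hz => ⟨hC.subset_ground hz, Set.disjoint_left.1 h hz⟩

/-- Independence splits over a separator. -/
lemma IsSep.indep_iff [M.Finite] (hS : M.IsSep S) {I : Set α} :
    M.Indep I ↔ M.Indep (I ∩ S) ∧ M.Indep (I \ S) ∧ I ⊆ M.E := by
  refine ⟨fun h => ⟨h.subset Set.inter_subset_left, h.subset Set.diff_subset,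
    h.subset_ground⟩, ?_⟩
  rintro ⟨h1, h2, hIE⟩
  by_contra hni
  obtain ⟨C, hC, hCI⟩ := (M.dep_of_not_indep hni hIE).exists_circuit_subset
  rcases hS.2 C hC with h | h
  · exact hC.1.not_indep (h1.subset fun z hz => ⟨hCI hz, h hz⟩)
  · exact hC.1.not_indep (h2.subset fun z hz => ⟨hCI hz, Set.disjoint_left.1 h hz⟩)

/-- Separators are preserved under duality. -/
lemma IsSep.dual [M.Finite] (hS : M.IsSep S) : M✶.IsSep S := by
  refine ⟨hS.1.trans_eq (dual_ground).symm, fun C hC => ?_⟩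
  by_contra hcon
  push_neg at hcon
  obtain ⟨hnsub, hndisj⟩ := hcon
  have hCE : C ⊆ M.E := hC.subset_ground.trans_eq dual_ground
  -- C ∩ S and C \ S are proper subsets of C, hence dual-independent
  obtain ⟨u, huC, huS⟩ : ∃ u, u ∈ C ∧ u ∉ S := by
    by_contra hcc; push_neg at hcc; exact hnsub hcc
  obtain ⟨v, hvC, hvS⟩ : ∃ v, v ∈ C ∧ v ∈ S := Set.not_disjoint_iff.1 hndisj
  have hI₁ : M✶.Indep (C ∩ S) :=
    hC.2 _ ⟨Set.inter_subset_left, fun hsub => huS (hsub huC).2⟩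
  have hI₂ : M✶.Indep (C \ S) :=
    hC.2 _ ⟨Set.diff_subset, fun hsub => (hsub hvC).2 hvS⟩
  obtain ⟨hsub₁, B₁, hB₁, hd₁⟩ := (dual_indep_iff_exists' (M := M)).1 hI₁
  obtain ⟨hsub₂, B₂, hB₂, hd₂⟩ := (dual_indep_iff_exists' (M := M)).1 hI₂
  -- build the mixed base
  set B₃ : Set α := (B₁ ∩ S) ∪ (B₂ \ S) with hB₃def
  have hB₃capS : B₃ ∩ S = B₁ ∩ S := by
    ext z
    constructor
    · rintro ⟨hz1 | hz1, hz2⟩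
      · exact ⟨hz1.1, hz2⟩
      · exact absurd hz2 hz1.2
    · rintro ⟨hz1, hz2⟩; exact ⟨Or.inl ⟨hz1, hz2⟩, hz2⟩
  have hB₃diffS : B₃ \ S = B₂ \ S := by
    ext z
    constructor
    · rintro ⟨hz1 | hz1, hz2⟩
      · exact absurd hz1.2 hz2
      · exact hz1
    · rintro ⟨hz1, hz2⟩; exact ⟨Or.inr ⟨hz1, hz2⟩, hz2⟩
  have hB₃E : B₃ ⊆ M.E :=
    Set.union_subset ((Set.inter_subset_left).trans hB₁.subset_ground)
      ((Set.diff_subset).trans hB₂.subset_ground)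
  have hB₃indep : M.Indep B₃ := by
    rw [hS.indep_iff, hB₃capS, hB₃diffS]
    exact ⟨hB₁.indep.subset Set.inter_subset_left, hB₂.indep.subset Set.diff_subset, hB₃E⟩
  have hB₃base : M.IsBase B₃ := by
    rw [isBase_iff_maximal_indep]
    refine ⟨hB₃indep, fun I hI hsub => ?_⟩
    intro z hzI
    by_contra hzB₃
    by_cases hzS : z ∈ S
    · have hzB₁ : z ∉ B₁ := fun h => hzB₃ (Or.inl ⟨h, hzS⟩)
      have : M.Indep (insert z B₁) := by
        rw [hS.indep_iff]
        refine ⟨?_, ?_, Set.insert_subset (hI.subset_ground hzI) hB₁.subset_ground⟩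
        · refine hI.subset ?_
          rintro w ⟨hw1, hw2⟩
          rcases hw1 with rfl | hw1
          · exact hzI
          · exact hsub (Or.inl ⟨hw1, hw2⟩)
        · refine hB₁.indep.subset ?_
          rintro w ⟨hw1, hw2⟩
          rcases hw1 with rfl | hw1
          · exact absurd hzS hw2
          · exact hw1
      rw [isBase_iff_maximal_indep] at hB₁
      exact hzB₁ (hB₁.2 this (Set.subset_insert z B₁) (Set.mem_insert z B₁))
    · have hzB₂ : z ∉ B₂ := fun h => hzB₃ (Or.inr ⟨h, hzS⟩)
      have : M.Indep (insert z B₂) := by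
        rw [hS.indep_iff]
        refine ⟨?_, ?_, Set.insert_subset (hI.subset_ground hzI) hB₂.subset_ground⟩
        · refine hB₂.indep.subset ?_
          rintro w ⟨hw1, hw2⟩
          rcases hw1 with rfl | hw1
          · exact absurd hw2 hzS
          · exact hw1
        · refine hI.subset ?_
          rintro w ⟨hw1, hw2⟩
          rcases hw1 with rfl | hw1
          · exact hzI
          · exact hsub (Or.inr ⟨hw1, hw2⟩)
      rw [isBase_iff_maximal_indep] at hB₂
      exact hzB₂ (hB₂.2 this (Set.subset_insert z B₂) (Set.mem_insert z B₂))
  -- B₃ is disjoint from C, contradicting dual-dependence of C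
  have hdisj : Disjoint C B₃ := by
    rw [Set.disjoint_left]
    rintro z hzC (hz | hz)
    · exact hd₁.ne_of_mem ⟨hzC, hz.2⟩ hz.1 rfl
    · exact hd₂.ne_of_mem ⟨hzC, hz.2⟩ hz.1 rfl
  exact hC.1.not_indep ((dual_indep_iff_exists' (M := M)).2 ⟨hCE.trans_eq dual_ground.symm, B₃, hB₃base, hdisj⟩)

/-- The connected component ("class") of an element. -/
def cls (M : Matroid α) (x : α) : Set α :=
  {y | y ∈ M.E ∧ (y = x ∨ ∃ C, M.IsCircuit' C ∧ x ∈ C ∧ y ∈ C)}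

lemma cls_subset_ground (M : Matroid α) (x : α) : M.cls x ⊆ M.E := fun _ h => h.1

lemma mem_cls_self (hx : x ∈ M.E) : x ∈ M.cls x := ⟨hx, Or.inl rfl⟩

lemma mem_cls_symm (hx : x ∈ M.E) (h : y ∈ M.cls x) : x ∈ M.cls y := by
  rcases h.2 with rfl | ⟨C, hC, h1, h2⟩
  · exact ⟨hx, Or.inl rfl⟩
  · exact ⟨hx, Or.inr ⟨C, hC, h2, h1⟩⟩

lemma mem_cls_trans [M.Finite] (hx : x ∈ M.E) (hzy : z ∈ M.cls y) (hyx : y ∈ M.cls x) :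
    z ∈ M.cls x := by
  rcases hzy.2 with rfl | ⟨C₂, hC₂, hy₂, hz₂⟩
  · exact hyx
  rcases hyx.2 with rfl | ⟨C₁, hC₁, hx₁, hy₁⟩
  · exact ⟨hzy.1, Or.inr ⟨C₂, hC₂, hy₂, hz₂⟩⟩
  obtain ⟨C, hC, hxC, hzC⟩ := circuit_trans hC₁ hC₂ hx₁ hz₂ ⟨y, hy₁, hy₂⟩
  exact ⟨hzy.1, Or.inr ⟨C, hC, hxC, hzC⟩⟩

/-- A component is a separator. -/
lemma cls_isSep [M.Finite] (hx : x ∈ M.E) : M.IsSep (M.cls x) := by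
  refine ⟨M.cls_subset_ground x, fun C hC => ?_⟩
  by_cases h : Disjoint C (M.cls x)
  · exact Or.inr h
  obtain ⟨a, haC, hacls⟩ := Set.not_disjoint_iff.1 h
  left
  intro b hbC
  have hbcls_a : b ∈ M.cls a := ⟨hC.subset_ground hbC, Or.inr ⟨C, hC, haC, hbC⟩⟩
  exact mem_cls_trans hx hbcls_a hacls

lemma cls_eq_of_mem [M.Finite] (hx : x ∈ M.E) (ha : a ∈ M.cls x) : M.cls a = M.cls x := by
  have haE : a ∈ M.E := ha.1
  ext z
  constructor
  · intro hz; exact mem_cls_trans hx hz ha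
  · intro hz; exact mem_cls_trans haE hz (mem_cls_symm hx ha)

lemma not_twoConn_iff_exists : ¬ M.TwoConn ↔
    ∃ x y, x ∈ M.E ∧ y ∈ M.E ∧ x ≠ y ∧ ∀ C, M.IsCircuit' C → x ∈ C → y ∉ C := by
  constructor
  · intro h
    by_contra hcon
    push_neg at hcon
    refine h fun e f he hf hne => ?_
    obtain ⟨C, hC, h1, h2⟩ := hcon e f he hf hne
    exact ⟨C, hC, h1, h2⟩
  · rintro ⟨x, y, hx, hy, hne, h⟩ htc
    obtain ⟨C, hC, h1, h2⟩ := htc hx hy hne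
    exact h C hC h1 h2

lemma not_mem_cls_iff (hx : x ∈ M.E) (hy : y ∈ M.E) (hne : x ≠ y) :
    y ∉ M.cls x ↔ ∀ C, M.IsCircuit' C → x ∈ C → y ∉ C := by
  constructor
  · intro h C hC h1 h2
    exact h ⟨hy, Or.inr ⟨C, hC, h1, h2⟩⟩
  · rintro h ⟨-, (rfl | ⟨C, hC, h1, h2⟩)⟩
    · exact hne rfl
    · exact h C hC h1 h2

/-- From failure of 2-connectivity, get a component avoiding a prescribed element `g`. -/
lemma exists_cls_avoiding [M.Finite] (h : ¬ M.TwoConn) (hg : g ∈ M.E) :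
    ∃ u, u ∈ M.E ∧ g ∉ M.cls u ∧ (M.E \ M.cls u).Nonempty := by
  obtain ⟨x, y, hx, hy, hne, hxy⟩ := not_twoConn_iff_exists.1 h
  have hyncls : y ∉ M.cls x := (not_mem_cls_iff hx hy hne).2 hxy
  by_cases hgx : g ∈ M.cls x
  · -- use cls y
    have hxncls : x ∉ M.cls y := fun hmem => hyncls (mem_cls_symm hy hmem)
    refine ⟨y, hy, fun hgy => ?_, ⟨x, hx, hxncls⟩⟩
    exact hyncls (mem_cls_trans hx (mem_cls_symm hy hgy) hgx)
  · exact ⟨x, hx, hgx, ⟨y, hy, hyncls⟩⟩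

/-- 2-connectivity is preserved under duality. -/
lemma TwoConn.dual [M.Finite] (h : M.TwoConn) : M✶.TwoConn := by
  intro x y hx hy hne
  rw [dual_ground] at hx hy
  by_contra hcon
  push_neg at hcon
  -- the dual component of x is a separator of M
  have hxd : x ∈ M✶.E := by rwa [dual_ground]
  have hS : M✶.IsSep (M✶.cls x) := cls_isSep hxd
  have hSM : M.IsSep (M✶.cls x) := by
    have := hS.dual (M := M✶)
    rwa [dual_dual] at this
  have hyncls : y ∉ M✶.cls x := by
    intro hmem
    rcases hmem.2 with rfl | ⟨C, hC, h1, h2⟩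
    · exact hne rfl
    · exact hcon C hC h1 h2
  obtain ⟨C, hC, hxC, hyC⟩ := h hx hy hne
  rcases hSM.2 C hC with hsub | hdisj
  · exact hyncls (hsub hyC)
  · exact (Set.disjoint_left.1 hdisj hxC) (mem_cls_self hxd)

lemma twoConn_dual_iff [M.Finite] : M✶.TwoConn ↔ M.TwoConn := by
  constructor
  · intro h
    have := h.dual
    rwa [dual_dual] at this
  · exact TwoConn.dual


/-! ### The key structural lemmas -/

/-- Lemma C : if `S` is a separator of `M ∖ f` with nonempty complement,
then every circuit of `M` through `f` meets `S`. -/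
lemma circuit_meets_sep [M.Finite] (hM : M.TwoConn) (hfE : f ∈ M.E)
    (hS : (M.del {f}).IsSep S) (hs : x ∈ S) (ht : y ∈ (M.E \ {f}) \ S)
    (hC : M.IsCircuit' C) (hfC : f ∈ C) : (C ∩ S).Nonempty := by
  have hSE : S ⊆ M.E \ {f} := hS.1.trans_eq (del_ground M {f})
  by_contra hdis
  rw [Set.not_nonempty_iff_eq_empty] at hdis
  have hnotS : ∀ z ∈ C, z ∉ S := fun z hz hz' =>
    Set.notMem_empty z (hdis ▸ Set.mem_inter hz hz')
  have hxE : x ∈ M.E := (hSE hs).1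
  have hxf : x ≠ f := (hSE hs).2
  have hyE : y ∈ M.E := ht.1.1
  have hyf : y ≠ f := ht.1.2
  have hyS : y ∉ S := ht.2
  have hxy : x ≠ y := fun h => hyS (h ▸ hs)
  obtain ⟨C₂, hC₂, hxC₂, hyC₂⟩ := hM hxE hyE hxy
  have hfC₂ : f ∈ C₂ := by
    by_contra hf₂
    have hdel : (M.del {f}).IsCircuit' C₂ :=
      del_circuit_iff.2 ⟨hC₂, fun z hz => ⟨hC₂.subset_ground hz, fun h => hf₂ (h ▸ hz)⟩⟩
    rcases hS.2 C₂ hdel with h | h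
    · exact hyS (h hyC₂)
    · exact (Set.disjoint_left.1 h hxC₂) hs
  have hxC : x ∉ C := fun h => hnotS x h hs
  obtain ⟨C₃, hC₃, hC₃sub, hxC₃⟩ := circuit_elim_strong hC₂ hC hfC₂ hfC hxC₂ hxC
  have hfC₃ : f ∉ C₃ := fun h => (hC₃sub h).2 rfl
  have hdel₃ : (M.del {f}).IsCircuit' C₃ :=
    del_circuit_iff.2 ⟨hC₃, fun z hz => ⟨hC₃.subset_ground hz, fun h => hfC₃ (h ▸ hz)⟩⟩
  have hC₃S : C₃ ⊆ S := by
    rcases hS.2 C₃ hdel₃ with h | h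
    · exact h
    · exact absurd hs (Set.disjoint_left.1 h hxC₃)
  have hss : C₃ ⊂ C₂ := by
    refine ⟨fun z hz => ?_, fun h => hfC₃ (h hfC₂)⟩
    rcases ((hC₃sub hz).1 : z ∈ C₂ ∪ C) with h' | h'
    · exact h'
    · exact absurd (hC₃S hz) (hnotS z h')
  exact hC₂.not_dep_ssubset hss hC₃.1

/-- Lemma 1 : a singleton separator class `{p}` of `M ∖ f` produces the
2-element cocircuit `{f, p}`. -/
lemma singleton_sep_cocircuit [M.Finite] (hM : M.TwoConn) (hfE : f ∈ M.E)
    (hpE : p ∈ M.E) (hpf : p ≠ f) (hS : (M.del {f}).IsSep {p})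
    (hrest : ∃ y, y ∈ (M.E \ {f}) \ {p}) : M✶.IsCircuit' {f, p} := by
  obtain ⟨Cfp, hCfp, hpCfp, hfCfp⟩ := hM hpE hfE hpf
  have hpIndep : M.Indep {p} :=
    hCfp.2 {p} ⟨Set.singleton_subset_iff.2 hpCfp,
      fun h => hpf (Set.mem_singleton_iff.1 (h hfCfp)).symm⟩
  -- every circuit through p contains f
  have hallp : ∀ C, M.IsCircuit' C → p ∈ C → f ∈ C := by
    intro C hC hpC
    by_contra hfC
    have hdel : (M.del {f}).IsCircuit' C :=
      del_circuit_iff.2 ⟨hC, fun z hz => ⟨hC.subset_ground hz, fun h => hfC (h ▸ hz)⟩⟩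
    rcases hS.2 C hdel with h | h
    · have : C = {p} := subset_antisymm h (Set.singleton_subset_iff.2 hpC)
      exact (this ▸ hC.1).not_indep hpIndep
    · exact (Set.disjoint_left.1 h hpC) rfl
  -- every circuit through f contains p
  have hallf : ∀ C, M.IsCircuit' C → f ∈ C → p ∈ C := by
    intro C hC hfC
    obtain ⟨y, hy⟩ := hrest
    obtain ⟨z, hz1, hz2⟩ := circuit_meets_sep hM hfE hS rfl hy hC hfC
    exact (Set.mem_singleton_iff.1 hz2) ▸ hz1
  have hfp : f ≠ p := fun h => hpf h.symm
  constructor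
  · rw [dual_dep_iff_forall]
    refine ⟨fun B hB => ?_, by intro z hz; rcases hz with rfl | rfl; exact hfE; exact hpE⟩
    by_contra hint
    rw [Set.not_nonempty_iff_eq_empty] at hint
    have hfB : f ∉ B := fun h =>
      Set.notMem_empty f (hint ▸ Set.mem_inter (Set.mem_insert f {p}) h)
    have hpB : p ∉ B := fun h =>
      Set.notMem_empty p (hint ▸ Set.mem_inter (Set.mem_insert_of_mem f rfl) h)
    have hdep : M.Dep (insert f B) := hB.insert_dep ⟨hfE, hfB⟩
    obtain ⟨C₀, hC₀, hC₀sub⟩ := hdep.exists_circuit_subset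
    have hfC₀ : f ∈ C₀ := by
      by_contra h
      have : C₀ ⊆ B := fun z hz => ((hC₀sub hz).resolve_left (fun h' => h (h' ▸ hz)))
      exact hC₀.1.not_indep (hB.indep.subset this)
    have hpC₀ : p ∈ C₀ := hallf C₀ hC₀ hfC₀
    rcases hC₀sub hpC₀ with h | h
    · exact hfp h.symm
    · exact hpB h
  · -- proper subsets of {f, p} are dual-independent
    intro D hD
    -- first : M✶.Indep {f} and M✶.Indep {p}
    have hIf : M✶.Indep {f} := by
      obtain ⟨B₁, hB₁, hsub₁⟩ := (hCfp.diff_singleton_indep hfCfp).exists_isBase_superset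
      have hfB₁ : f ∉ B₁ := by
        intro h
        have : Cfp ⊆ B₁ := by
          intro z hz
          by_cases hzf : z = f
          · exact hzf ▸ h
          · exact hsub₁ ⟨hz, hzf⟩
        exact hCfp.1.not_indep (hB₁.indep.subset this)
      exact (dual_indep_iff_exists' (M := M)).2 ⟨Set.singleton_subset_iff.2 hfE, B₁, hB₁,
        Set.disjoint_left.2 (fun z hz => Set.mem_singleton_iff.1 hz ▸ hfB₁)⟩
    have hIp : M✶.Indep {p} := by
      obtain ⟨B₁, hB₁, hsub₁⟩ := (hCfp.diff_singleton_indep hpCfp).exists_isBase_superset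
      have hpB₁ : p ∉ B₁ := by
        intro h
        have : Cfp ⊆ B₁ := by
          intro z hz
          by_cases hzp : z = p
          · exact hzp ▸ h
          · exact hsub₁ ⟨hz, hzp⟩
        exact hCfp.1.not_indep (hB₁.indep.subset this)
      exact (dual_indep_iff_exists' (M := M)).2 ⟨Set.singleton_subset_iff.2 hpE, B₁, hB₁,
        Set.disjoint_left.2 (fun z hz => Set.mem_singleton_iff.1 hz ▸ hpB₁)⟩
    -- D is a proper subset of the pair
    have : D ⊆ {f} ∨ D ⊆ {p} := by
      by_contra hcc
      push_neg at hcc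
      obtain ⟨h1, h2⟩ := hcc
      have hDf : f ∈ D ∨ p ∈ D := by
        by_contra hcc2
        push_neg at hcc2
        exact h1 (fun z hz => by
          rcases hD.subset hz with rfl | rfl
          · exact absurd hz hcc2.1
          · exact absurd hz hcc2.2)
      have hfD : f ∈ D := by
        rcases hDf with h | h
        · exact h
        · by_contra hfD
          refine h2 (fun z hz => ?_)
          rcases hD.subset hz with rfl | rfl
          · exact absurd hz hfD
          · exact rfl
      have hpD : p ∈ D := by
        by_contra hpD
        refine h1 (fun z hz => ?_)
        rcases hD.subset hz with rfl | rfl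
        · exact rfl
        · exact absurd hz hpD
      exact hD.ne (subset_antisymm hD.subset (by
        intro z hz
        rcases hz with rfl | rfl
        · exact hfD
        · exact hpD))
    rcases this with h | h
    · exact hIf.subset h
    · exact hIp.subset h


/-- `A` is a connected component of `M ∖ f`, with at least one other component. -/
def IsPart (M : Matroid α) (f : α) (A : Set α) : Prop :=
  f ∈ M.E ∧ (∃ x, x ∈ (M.del {f}).E ∧ A = (M.del {f}).cls x) ∧
    ((M.E \ {f}) \ A).Nonempty

lemma IsPart.subset (hP : M.IsPart f A) : A ⊆ M.E \ {f} := by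
  obtain ⟨-, ⟨x, hx, rfl⟩, -⟩ := hP
  exact ((M.del {f}).cls_subset_ground x).trans_eq (del_ground M {f})

lemma IsPart.nonempty (hP : M.IsPart f A) : A.Nonempty := by
  obtain ⟨-, ⟨x, hx, rfl⟩, -⟩ := hP
  exact ⟨x, mem_cls_self hx⟩

lemma IsPart.isSep [M.Finite] (hP : M.IsPart f A) : (M.del {f}).IsSep A := by
  obtain ⟨-, ⟨x, hx, rfl⟩, -⟩ := hP
  exact cls_isSep hx

lemma IsPart.cls_eq [M.Finite] (hP : M.IsPart f A) (ha : a ∈ A) :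
    A = (M.del {f}).cls a := by
  obtain ⟨-, ⟨x, hx, rfl⟩, -⟩ := hP
  exact (cls_eq_of_mem hx ha).symm

/-- Circuits of `M` avoiding `f` respect a part of `M ∖ f`. -/
lemma IsPart.circuit_subset_or_disjoint [M.Finite] (hP : M.IsPart f A)
    (hC : M.IsCircuit' C) (hfC : f ∉ C) : C ⊆ A ∨ Disjoint C A :=
  hP.isSep.2 C (del_circuit_iff.2 ⟨hC, fun z hz =>
    ⟨hC.subset_ground hz, fun h => hfC (h ▸ hz)⟩⟩)

/-- From failure of 2-connectivity of `M ∖ f`, a part avoiding a prescribed element. -/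
lemma exists_isPart_avoiding [M.Finite] (hf : f ∈ M.E) (h : ¬ (M.del {f}).TwoConn)
    (hg : g ∈ M.E) (hgf : g ≠ f) : ∃ A, M.IsPart f A ∧ g ∉ A := by
  have hg' : g ∈ (M.del {f}).E := by rw [del_ground]; exact ⟨hg, hgf⟩
  obtain ⟨u, huE, hgu, hne⟩ := exists_cls_avoiding h hg'
  refine ⟨(M.del {f}).cls u, ⟨hf, ⟨u, huE, rfl⟩, ?_⟩, hgu⟩
  obtain ⟨w, hw⟩ := hne
  exact ⟨w, by rw [del_ground] at hw; exact hw⟩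

/-- From failure of 2-connectivity of `M ∖ f`, two disjoint parts. -/
lemma exists_two_isPart [M.Finite] (hf : f ∈ M.E) (h : ¬ (M.del {f}).TwoConn) :
    ∃ A₁ A₂, M.IsPart f A₁ ∧ M.IsPart f A₂ ∧ Disjoint A₁ A₂ := by
  set N := M.del {f} with hN
  obtain ⟨x, y, hx, hy, hne, hxy⟩ := not_twoConn_iff_exists.1 h
  have hyx : y ∉ N.cls x := (not_mem_cls_iff hx hy hne).2 hxy
  have hxy' : x ∉ N.cls y := fun hmem => hyx (mem_cls_symm hy hmem)
  have hxE := hx; have hyE := hy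
  rw [del_ground] at hxE hyE
  refine ⟨N.cls x, N.cls y, ⟨hf, ⟨x, hx, rfl⟩, ⟨y, hyE, hyx⟩⟩,
    ⟨hf, ⟨y, hy, rfl⟩, ⟨x, hxE, hxy'⟩⟩, ?_⟩
  rw [Set.disjoint_left]
  intro z hzx hzy
  exact hyx (mem_cls_trans hx (mem_cls_symm hy hzy) hzx)

/-- The descent lemma (Lemma 2) : from a part `A` at `f` with at least two elements
and any `a ∈ A`, we obtain a part at `a` (in `M` or `M✶`) inside `A \ {a}`. -/
lemma isPart_descend [M.Finite] (hM : M.TwoConn)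
    (hbad : ∀ g ∈ M.E, ¬ (M.del {g}).TwoConn ∨ ¬ (M✶.del {g}).TwoConn)
    (hP : M.IsPart f A) (ha : a ∈ A) (h2 : 2 ≤ A.ncard) :
    ∃ A', (M.IsPart a A' ∨ M✶.IsPart a A') ∧ A' ⊆ A \ {a} := by
  have hfE : f ∈ M.E := hP.1
  have hasub := hP.subset ha
  have haE : a ∈ M.E := hasub.1
  have haf : a ≠ f := hasub.2
  have hAfin : A.Finite := M.set_finite A (hP.subset.trans Set.diff_subset)
  -- a circuit inside A through a, avoiding f
  obtain ⟨x', hx'A, hx'a⟩ : ∃ x', x' ∈ A ∧ x' ≠ a :=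
    Set.exists_ne_of_one_lt_ncard (by omega) a
  have hAa : A = (M.del {f}).cls a := hP.cls_eq ha
  have hx'cls : x' ∈ (M.del {f}).cls a := hAa ▸ hx'A
  obtain ⟨C'', hC''del, haC'', hx'C''⟩ : ∃ C, (M.del {f}).IsCircuit' C ∧ a ∈ C ∧ x' ∈ C := by
    rcases hx'cls.2 with rfl | ⟨C, hC, h1, h2'⟩
    · exact absurd rfl hx'a
    · exact ⟨C, hC, h1, h2'⟩
  obtain ⟨hC'', hC''sub⟩ := del_circuit_iff.1 hC''del
  have hfC'' : f ∉ C'' := fun h => (hC''sub h).2 rfl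
  have hC''A : C'' ⊆ A := by
    rcases hP.circuit_subset_or_disjoint hC'' hfC'' with h | h
    · exact h
    · exact absurd ha (Set.disjoint_left.1 h haC'')
  -- the complement part B
  set B : Set α := (M.E \ {f}) \ A with hBdef
  rcases hbad a haE with hb | hb
  · -- Case 1 : M ∖ a is disconnected
    obtain ⟨B', hPB', hfB'⟩ := exists_isPart_avoiding haE hb hfE (fun h => haf h.symm)
    refine ⟨B', Or.inl hPB', ?_⟩
    -- show B' ∩ B = ∅
    have hBB' : ∀ b ∈ B', b ∉ B := by
      intro b hbB' hbB
      have hbE : b ∈ M.E := (hPB'.subset hbB').1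
      have hba : b ≠ a := (hPB'.subset hbB').2
      have hbf : b ≠ f := hbB.1.2
      have hbA : b ∉ A := hbB.2
      -- every circuit through f and b contains a
      have h1 : ∀ C, M.IsCircuit' C → f ∈ C → b ∈ C → a ∈ C := by
        intro C hC hfC hbC
        by_contra haC
        rcases hPB'.circuit_subset_or_disjoint hC haC with h | h
        · exact hfB' (h hfC)
        · exact (Set.disjoint_left.1 h hbC) hbB'
      obtain ⟨C, hC, hfC, hbC⟩ := hM hfE hbE (fun h => hbf h.symm)
      have haC : a ∈ C := h1 C hC hfC hbC
      have hbC'' : b ∉ C'' := fun h => hbA (hC''A h)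
      obtain ⟨C₃, hC₃, hC₃sub, hbC₃⟩ := circuit_elim_strong hC hC'' haC haC'' hbC hbC''
      have haC₃ : a ∉ C₃ := fun h => (hC₃sub h).2 rfl
      have hfC₃ : f ∉ C₃ := fun h => haC₃ (h1 C₃ hC₃ h hbC₃)
      have hC₃disj : Disjoint C₃ A := by
        rcases hP.circuit_subset_or_disjoint hC₃ hfC₃ with h | h
        · exact absurd (h hbC₃) hbA
        · exact h
      have hss : C₃ ⊂ C := by
        refine ⟨fun z hz => ?_, fun h => hfC₃ (h hfC)⟩
        rcases (hC₃sub hz).1 with h' | h'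
        · exact h'
        · exact absurd (hC''A h') (Set.disjoint_left.1 hC₃disj hz)
      exact hC.not_dep_ssubset hss hC₃.1
    intro z hz
    have hzE : z ∈ M.E := (hPB'.subset hz).1
    have hza : z ≠ a := (hPB'.subset hz).2
    have hzf : z ≠ f := fun h => hfB' (h ▸ hz)
    have hzA : z ∈ A := by
      by_contra hcc
      exact hBB' z hz ⟨⟨hzE, hzf⟩, hcc⟩
    exact ⟨hzA, hza⟩
  · -- Case 2 : M✶ ∖ a is disconnected
    have haE' : a ∈ M✶.E := by rwa [dual_ground]
    have hfE' : f ∈ M✶.E := by rwa [dual_ground]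
    obtain ⟨B', hPB', hfB'⟩ := exists_isPart_avoiding (M := M✶) haE' hb hfE'
      (fun h => haf h.symm)
    refine ⟨B', Or.inr hPB', ?_⟩
    have haIndep : M.Indep {a} := by
      obtain ⟨Caf, hCaf, haCaf, hfCaf⟩ := hM haE hfE haf
      exact hCaf.2 {a} ⟨Set.singleton_subset_iff.2 haCaf,
        fun h => haf (Set.mem_singleton_iff.1 (h hfCaf)).symm⟩
    have hSepCon : (M.con {a}).IsSep B' := by
      show ((M✶.del {a})✶).IsSep B'
      exact hPB'.isSep.dual
    have hBB' : ∀ b ∈ B', b ∉ B := by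
      intro b hbB' hbB
      have hbE : b ∈ M.E := by
        have := (hPB'.subset hbB').1; rwa [dual_ground] at this
      have hba : b ≠ a := (hPB'.subset hbB').2
      have hbf : b ≠ f := hbB.1.2
      have hbA : b ∉ A := hbB.2
      obtain ⟨C, hC, haC, hbC⟩ := hM haE hbE (fun h => hbA (h ▸ ha))
      have hfC : f ∈ C := by
        by_contra hfC
        rcases hP.circuit_subset_or_disjoint hC hfC with h | h
        · exact hbA (h hbC)
        · exact (Set.disjoint_left.1 h haC) ha
      have hcc : (M.con {a}).IsCircuit' (C \ {a}) := circuit_con_of_circuit haIndep hC haC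
      rcases hSepCon.2 _ hcc with h | h
      · exact hfB' (h ⟨hfC, fun hh => haf (Set.mem_singleton_iff.1 hh).symm⟩)
      · exact (Set.disjoint_left.1 h ⟨hbC, fun hh => hba (Set.mem_singleton_iff.1 hh)⟩) hbB'
    intro z hz
    have hzE : z ∈ M.E := by
      have := (hPB'.subset hz).1; rwa [dual_ground] at this
    have hza : z ≠ a := (hPB'.subset hz).2
    have hzf : z ≠ f := fun h => hfB' (h ▸ hz)
    have hzA : z ∈ A := by
      by_contra hcc
      exact hBB' z hz ⟨⟨hzE, hzf⟩, hcc⟩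
    exact ⟨hzA, hza⟩


/-- Descent : every part contains a small (2-element) circuit or cocircuit
(together with its defining element). -/
lemma descend_aux [M.Finite] (hM : M.TwoConn) (hM' : M✶.TwoConn)
    (hbad : ∀ g ∈ M.E, ¬ (M.del {g}).TwoConn ∨ ¬ (M✶.del {g}).TwoConn) :
    ∀ n : ℕ, ∀ A : Set α, ∀ f : α, A.ncard ≤ n → (M.IsPart f A ∨ M✶.IsPart f A) →
    ∃ g q : α, g ≠ q ∧ ({g, q} : Set α) ⊆ A ∪ {f} ∧
      (M.IsCircuit' {g, q} ∨ M✶.IsCircuit' {g, q}) := by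
  have hbad' : ∀ g ∈ M✶.E, ¬ (M✶.del {g}).TwoConn ∨ ¬ (M✶✶.del {g}).TwoConn := by
    intro g hg
    rw [dual_ground] at hg
    rcases hbad g hg with h | h
    · right; rwa [dual_dual]
    · left; exact h
  intro n
  induction n with
  | zero =>
    intro A f hle hP
    exfalso
    have hne : A.Nonempty := by
      rcases hP with h | h
      · exact h.nonempty
      · exact h.nonempty
    have hfin : A.Finite := by
      rcases hP with h | h
      · exact M.set_finite A (h.subset.trans Set.diff_subset)
      · refine M.set_finite A ?_
        have := h.subset.trans Set.diff_subset
        rwa [dual_ground] at this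
    have := (Set.ncard_pos hfin).2 hne
    omega
  | succ n ih =>
    intro A f hle hP
    have hfin : A.Finite := by
      rcases hP with h | h
      · exact M.set_finite A (h.subset.trans Set.diff_subset)
      · refine M.set_finite A ?_
        have := h.subset.trans Set.diff_subset
        rwa [dual_ground] at this
    have hne : A.Nonempty := by
      rcases hP with h | h
      · exact h.nonempty
      · exact h.nonempty
    by_cases h1 : A.ncard = 1
    · -- base case : singleton part gives a small circuit/cocircuit
      obtain ⟨p, rfl⟩ := Set.ncard_eq_one.1 h1
      rcases hP with hPM | hPD
      · have hpsub := hPM.subset rfl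
        have hcoc : M✶.IsCircuit' {f, p} :=
          singleton_sep_cocircuit hM hPM.1 hpsub.1 hpsub.2 hPM.isSep hPM.2.2
        refine ⟨f, p, fun h => hpsub.2 h.symm, ?_, Or.inr hcoc⟩
        rintro z (rfl | rfl)
        · exact Or.inr rfl
        · exact Or.inl rfl
      · have hpsub := hPD.subset rfl
        have hcoc : M✶✶.IsCircuit' {f, p} :=
          singleton_sep_cocircuit (M := M✶) hM' hPD.1 hpsub.1 hpsub.2 hPD.isSep hPD.2.2
        rw [dual_dual] at hcoc
        refine ⟨f, p, fun h => hpsub.2 h.symm, ?_, Or.inl hcoc⟩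
        rintro z (rfl | rfl)
        · exact Or.inr rfl
        · exact Or.inl rfl
    · -- descend to a smaller part
      have h2 : 2 ≤ A.ncard := by
        have := (Set.ncard_pos hfin).2 hne
        omega
      obtain ⟨a, haA⟩ := hne
      have step : ∃ A', (M.IsPart a A' ∨ M✶.IsPart a A') ∧ A' ⊆ A \ {a} := by
        rcases hP with hPM | hPD
        · exact isPart_descend hM hbad hPM haA h2
        · obtain ⟨A', hA', hsub⟩ := isPart_descend (M := M✶) hM' hbad' hPD haA h2
          rcases hA' with h | h
          · exact ⟨A', Or.inr h, hsub⟩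
          · rw [dual_dual] at h
            exact ⟨A', Or.inl h, hsub⟩
      obtain ⟨A', hA', hsub⟩ := step
      have hle' : A'.ncard ≤ n := by
        have hsmall : A'.ncard ≤ (A \ {a}).ncard :=
          Set.ncard_le_ncard hsub hfin.diff
        have hlt : (A \ {a}).ncard < A.ncard :=
          Set.ncard_diff_singleton_lt_of_mem haA hfin
        omega
      obtain ⟨g, q, hgq, hsub', hcirc⟩ := ih A' a hle' hA'
      refine ⟨g, q, hgq, ?_, hcirc⟩
      intro z hz
      rcases hsub' hz with hzA' | rfl
      · exact Or.inl (hsub hzA').1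
      · exact Or.inl haA

lemma twoConn_of_subsingleton (h : M.E.Subsingleton) : M.TwoConn :=
  fun x y hx hy hne => absurd (h hx hy) hne

end Matroid

theorem exists_element_delete_contract_two_connected {α : Type*} (M : Matroid α)
    [M.Finite] (hcard : 2 ≤ M.E.ncard) (h2conn : M.TwoConn)
    (hd2 : {C : Set α | M.IsCircuit' C ∧ C.ncard = 2}.ncard
         + {C : Set α | (M✶).IsCircuit' C ∧ C.ncard = 2}.ncard ≤ 1) :
    ∃ e ∈ M.E, (M.del {e}).TwoConn ∧ (M.con {e}).TwoConn := by
  classical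
  by_cases hsmall : M.E.ncard ≤ 2
  · -- two-element ground set : trivial
    have h2 : M.E.ncard = 2 := le_antisymm hsmall hcard
    obtain ⟨u, v, huv, hE⟩ := Set.ncard_eq_two.1 h2
    have hsub : M.E \ {u} ⊆ {v} := by
      intro z hz
      rw [hE] at hz
      rcases hz.1 with rfl | rfl
      · exact absurd rfl hz.2
      · exact rfl
    refine ⟨u, by rw [hE]; exact Set.mem_insert u {v}, ?_, ?_⟩
    · refine Matroid.twoConn_of_subsingleton ?_
      rw [Matroid.del_ground]
      exact Set.subsingleton_singleton.anti hsub
    · refine Matroid.twoConn_of_subsingleton ?_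
      rw [Matroid.con_ground]
      exact Set.subsingleton_singleton.anti hsub
  · by_contra hcon
    push_neg at hcon
    have hM' : M✶.TwoConn := h2conn.dual
    have hbad : ∀ g ∈ M.E, ¬ (M.del {g}).TwoConn ∨ ¬ (M✶.del {g}).TwoConn := by
      intro g hg
      by_cases hdel : (M.del {g}).TwoConn
      · right
        intro hdd
        exact (hcon g hg hdel) hdd.dual
      · left; exact hdel
    set S1 := {C : Set α | M.IsCircuit' C ∧ C.ncard = 2} with hS1
    set S2 := {C : Set α | (M✶).IsCircuit' C ∧ C.ncard = 2} with hS2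
    have hfin1 : S1.Finite :=
      (Set.Finite.finite_subsets M.ground_finite).subset fun C hC => hC.1.subset_ground
    have hfin2 : S2.Finite := by
      refine (Set.Finite.finite_subsets M.ground_finite).subset fun C hC => ?_
      have := hC.1.subset_ground
      rwa [Matroid.dual_ground] at this
    have huniq : ∀ T U : Set α, (M.IsCircuit' T ∨ M✶.IsCircuit' T) → T.ncard = 2 →
        (M.IsCircuit' U ∨ M✶.IsCircuit' U) → U.ncard = 2 → T = U := by
      intro T U hT hTc hU hUc
      by_contra hne
      rcases hT with hT | hT <;> rcases hU with hU | hU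
      · have hsub : ({T, U} : Set (Set α)) ⊆ S1 := by
          rintro Z (rfl | rfl)
          exacts [⟨hT, hTc⟩, ⟨hU, hUc⟩]
        have := Set.ncard_le_ncard hsub hfin1
        rw [Set.ncard_pair hne] at this
        omega
      · have ha : 1 ≤ S1.ncard := (Set.ncard_pos hfin1).2 ⟨T, hT, hTc⟩
        have hb : 1 ≤ S2.ncard := (Set.ncard_pos hfin2).2 ⟨U, hU, hUc⟩
        omega
      · have ha : 1 ≤ S1.ncard := (Set.ncard_pos hfin1).2 ⟨U, hU, hUc⟩
        have hb : 1 ≤ S2.ncard := (Set.ncard_pos hfin2).2 ⟨T, hT, hTc⟩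
        omega
      · have hsub : ({T, U} : Set (Set α)) ⊆ S2 := by
          rintro Z (rfl | rfl)
          exacts [⟨hT, hTc⟩, ⟨hU, hUc⟩]
        have := Set.ncard_le_ncard hsub hfin2
        rw [Set.ncard_pair hne] at this
        omega
    -- a first part, to find the small set
    obtain ⟨g₀, hg₀⟩ : M.E.Nonempty := (Set.ncard_pos M.ground_finite).1 (by omega)
    have getParts : ∀ g ∈ M.E, ∃ A₁ A₂,
        ((M.IsPart g A₁ ∨ M✶.IsPart g A₁) ∧ (M.IsPart g A₂ ∨ M✶.IsPart g A₂)) ∧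
        Disjoint A₁ A₂ := by
      intro g hg
      rcases hbad g hg with h | h
      · obtain ⟨A₁, A₂, hP1, hP2, hd⟩ := Matroid.exists_two_isPart hg h
        exact ⟨A₁, A₂, ⟨Or.inl hP1, Or.inl hP2⟩, hd⟩
      · obtain ⟨A₁, A₂, hP1, hP2, hd⟩ :=
          Matroid.exists_two_isPart (M := M✶) (by rwa [Matroid.dual_ground]) h
        exact ⟨A₁, A₂, ⟨Or.inr hP1, Or.inr hP2⟩, hd⟩
    obtain ⟨A₀, A₀', ⟨hA₀, -⟩, -⟩ := getParts g₀ hg₀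
    obtain ⟨g, q, hgq, hsub₀, hcirc₀⟩ :=
      Matroid.descend_aux h2conn hM' hbad A₀.ncard A₀ g₀ le_rfl hA₀
    have hgE : g ∈ M.E := by
      rcases hcirc₀ with h | h
      · exact h.subset_ground (Set.mem_insert g {q})
      · have := h.subset_ground (Set.mem_insert g {q})
        rwa [Matroid.dual_ground] at this
    obtain ⟨A₁, A₂, ⟨hP1, hP2⟩, hdisj⟩ := getParts g hgE
    obtain ⟨u₁, w₁, hne₁, hsub₁, hc₁⟩ :=
      Matroid.descend_aux h2conn hM' hbad A₁.ncard A₁ g le_rfl hP1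
    obtain ⟨u₂, w₂, hne₂, hsub₂, hc₂⟩ :=
      Matroid.descend_aux h2conn hM' hbad A₂.ncard A₂ g le_rfl hP2
    have hT : ({u₁, w₁} : Set α) = {u₂, w₂} :=
      huniq _ _ hc₁ (Set.ncard_pair hne₁) hc₂ (Set.ncard_pair hne₂)
    obtain ⟨w, hwT, hwg⟩ : ∃ w, w ∈ ({u₁, w₁} : Set α) ∧ w ≠ g := by
      by_cases h : u₁ = g
      · exact ⟨w₁, Or.inr rfl, fun hh => hne₁ (h ▸ hh ▸ rfl : u₁ = w₁)⟩
      · exact ⟨u₁, Or.inl rfl, h⟩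
    have hw1 : w ∈ A₁ := by
      rcases hsub₁ hwT with h | h
      · exact h
      · exact absurd h hwg
    have hw2 : w ∈ A₂ := by
      rcases hsub₂ (hT ▸ hwT) with h | h
      · exact h
      · exact absurd h hwg
    exact (Set.disjoint_left.1 hdisj hw1) hw2
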